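/- Let F : L → H be a groupoid extension (assume L⁰ = H⁰ and F⁰ = id) with fibre G. Then: (i) s(g) = r(g) for every g ∈ G¹, so G is a subgroup bundle of L; (ii) G is normal in L: m(m(l,g), i(l)) ∈ G¹ for all l ∈ L¹, g ∈ G¹ with s(l) = r(g); (iii) the range map of L restricts to an open map G¹ → L⁰; (iv) F¹ induces a homeomorphism onto H¹ from the quotient space L¹/G of L¹ by the relation l₁ ∼ l₂ iff l₁ = m(g, l₂) for some g ∈ G¹ (with the quotient topology), compatibly with the groupoid structures. Conversely, if G ⊆ L is a wide subgroupoid with the subspace topology satisfying (i)–(iii), then the quotient L¹/G with the quotient topology carries a unique topological groupoid structure H with object space L⁰ making the quotient map a continuous functor, and this quotient functor is a groupoid extension with fibre G. -/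

import Mathlib

/-- A topological groupoid: object space, arrow space, continuous open range and
source maps, continuous unit, inversion and (partially defined, here totalized)
multiplication maps, satisfying the usual algebraic laws on composable arrows. -/
structure TopGroupoid where
  Obj : Type
  Arr : Type
  [topObj : TopologicalSpace Obj]
  [topArr : TopologicalSpace Arr]
  r : Arr → Obj
  s : Arr → Obj
  u : Obj → Arr
  i : Arr → Arr
  m : Arr → Arr → Arr
  cont_r : Continuous r
  cont_s : Continuous s
  open_r : IsOpenMap r
  open_s : IsOpenMap s
  cont_u : Continuous u
  cont_i : Continuous i
  cont_m : Continuous (fun p : {p : Arr × Arr // s p.1 = r p.2} => m p.1.1 p.1.2)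
  r_u : ∀ x, r (u x) = x
  s_u : ∀ x, s (u x) = x
  r_m : ∀ g₁ g₂, s g₁ = r g₂ → r (m g₁ g₂) = r g₁
  s_m : ∀ g₁ g₂, s g₁ = r g₂ → s (m g₁ g₂) = s g₂
  m_assoc : ∀ g₁ g₂ g₃, s g₁ = r g₂ → s g₂ = r g₃ → m (m g₁ g₂) g₃ = m g₁ (m g₂ g₃)
  u_m : ∀ g, m (u (r g)) g = g
  m_u : ∀ g, m g (u (s g)) = g
  r_i : ∀ g, r (i g) = s g
  s_i : ∀ g, s (i g) = r g
  m_i : ∀ g, m g (i g) = u (r g)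
  i_m : ∀ g, m (i g) g = u (s g)

attribute [instance] TopGroupoid.topObj TopGroupoid.topArr

/-- A continuous functor between topological groupoids. -/
structure ContFunctor (L H : TopGroupoid) where
  obj : L.Obj → H.Obj
  arr : L.Arr → H.Arr
  cont_obj : Continuous obj
  cont_arr : Continuous arr
  r_arr : ∀ l, H.r (arr l) = obj (L.r l)
  s_arr : ∀ l, H.s (arr l) = obj (L.s l)
  u_arr : ∀ x, arr (L.u x) = H.u (obj x)
  i_arr : ∀ l, arr (L.i l) = H.i (arr l)
  m_arr : ∀ l₁ l₂, L.s l₁ = L.r l₂ → arr (L.m l₁ l₂) = H.m (arr l₁) (arr l₂)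

/-- The fibre product `H¹ ×_{s,H⁰,F⁰} L⁰` (with the subspace topology). -/
abbrev FibTarget {L H : TopGroupoid} (F : ContFunctor L H) : Type :=
  {p : H.Arr × L.Obj // H.s p.1 = F.obj p.2}

/-- The map `(F¹, s) : L¹ → H¹ ×_{s,H⁰,F⁰} L⁰`. -/
def fibMap {L H : TopGroupoid} (F : ContFunctor L H) (l : L.Arr) : FibTarget F :=
  ⟨(F.arr l, L.s l), F.s_arr l⟩

/-- A groupoid fibration: a continuous functor for which `(F¹, s)` is an open surjection. -/
def IsFibration {L H : TopGroupoid} (F : ContFunctor L H) : Prop :=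
  Function.Surjective (fibMap F) ∧ IsOpenMap (fibMap F)

/-- A groupoid covering: a continuous functor for which `(F¹, s)` is a homeomorphism. -/
def IsCovering {L H : TopGroupoid} (F : ContFunctor L H) : Prop :=
  IsHomeomorph (fibMap F)

/-- The arrow set of the fibre of `F`: arrows `g` of `L` with `F¹ g = u (F⁰ (s g))`. -/
def fibreArr {L H : TopGroupoid} (F : ContFunctor L H) : Set L.Arr :=
  {g | F.arr g = H.u (F.obj (L.s g))}



namespace GEproof

variable (L : TopGroupoid)

lemma i_i (g : L.Arr) : L.i (L.i g) = g := by
  calc L.i (L.i g) = L.m (L.u (L.r (L.i (L.i g)))) (L.i (L.i g)) := (L.u_m _).symm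
    _ = L.m (L.u (L.r g)) (L.i (L.i g)) := by rw [L.r_i, L.s_i]
    _ = L.m (L.m g (L.i g)) (L.i (L.i g)) := by rw [L.m_i]
    _ = L.m g (L.m (L.i g) (L.i (L.i g))) :=
        L.m_assoc _ _ _ (L.r_i g).symm (by rw [L.s_i, L.r_i]; exact (L.s_i g).symm)
    _ = L.m g (L.u (L.r (L.i g))) := by rw [L.m_i]
    _ = g := by rw [L.r_i, L.m_u]

lemma i_u (x : L.Obj) : L.i (L.u x) = L.u x := by
  have h1 : L.i (L.u x) = L.m (L.u x) (L.i (L.u x)) := by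
    conv_lhs => rw [← L.u_m (L.i (L.u x))]
    rw [L.r_i, L.s_u]
  rw [h1, L.m_i, L.r_u]

lemma i_mm (a b : L.Arr) (h : L.s a = L.r b) : L.i (L.m a b) = L.m (L.i b) (L.i a) := by
  have hmy : L.m (L.m a b) (L.m (L.i b) (L.i a)) = L.u (L.r (L.m a b)) := by
    have hrm : L.r (L.m (L.i b) (L.i a)) = L.s b := by
      rw [L.r_m _ _ (by rw [L.s_i, L.r_i, ← h]), L.r_i]
    have h1 : L.m (L.m a b) (L.m (L.i b) (L.i a)) = L.m a (L.m b (L.m (L.i b) (L.i a))) :=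
      L.m_assoc _ _ _ h (by rw [hrm])
    have h2 : L.m b (L.m (L.i b) (L.i a)) = L.m (L.m b (L.i b)) (L.i a) :=
      (L.m_assoc _ _ _ (L.r_i b).symm (by rw [L.s_i, L.r_i, ← h])).symm
    have h3 : L.m (L.u (L.r b)) (L.i a) = L.i a := by
      rw [← h, ← L.r_i a]; exact L.u_m _
    rw [h1, h2, L.m_i, h3, L.m_i, L.r_m a b h]
  have hr : L.r (L.m (L.i b) (L.i a)) = L.s (L.m a b) := by
    rw [L.r_m _ _ (by rw [L.s_i, L.r_i, ← h]), L.r_i, L.s_m a b h]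
  calc L.i (L.m a b)
      = L.m (L.i (L.m a b)) (L.u (L.r (L.m a b))) := by
        rw [← L.s_i (L.m a b)]; exact (L.m_u _).symm
    _ = L.m (L.i (L.m a b)) (L.m (L.m a b) (L.m (L.i b) (L.i a))) := by rw [hmy]
    _ = L.m (L.m (L.i (L.m a b)) (L.m a b)) (L.m (L.i b) (L.i a)) :=
        (L.m_assoc _ _ _ (L.s_i _) hr.symm).symm
    _ = L.m (L.u (L.s (L.m a b))) (L.m (L.i b) (L.i a)) := by rw [L.i_m]
    _ = L.m (L.i b) (L.i a) := by rw [← hr]; exact L.u_m _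


/-- The left-translation relation by a wide subgroupoid. -/
def qrel (L : TopGroupoid) (G : Set L.Arr) : L.Arr → L.Arr → Prop :=
  fun l₁ l₂ => ∃ g ∈ G, l₁ = L.m g l₂ ∧ L.s g = L.r l₂

section Rel

variable {L} {G : Set L.Arr}
variable (hGu : ∀ x, L.u x ∈ G)
variable (hGi : ∀ g ∈ G, L.i g ∈ G)
variable (hGm : ∀ g₁ g₂, g₁ ∈ G → g₂ ∈ G → L.s g₁ = L.r g₂ → L.m g₁ g₂ ∈ G)
variable (hGsr : ∀ g ∈ G, L.s g = L.r g)
variable (hGn : ∀ l g, g ∈ G → L.s l = L.r g → L.m (L.m l g) (L.i l) ∈ G)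

set_option linter.unusedSectionVars false

include hGu hGi hGm hGsr hGn

lemma rel_refl (l : L.Arr) : qrel L G l l :=
  ⟨L.u (L.r l), hGu _, (L.u_m l).symm, L.s_u _⟩

lemma rel_r {l₁ l₂ : L.Arr} (h : qrel L G l₁ l₂) : L.r l₁ = L.r l₂ := by
  obtain ⟨g, hg, rfl, hsg⟩ := h
  rw [L.r_m g l₂ hsg, ← hGsr g hg, hsg]

lemma rel_s {l₁ l₂ : L.Arr} (h : qrel L G l₁ l₂) : L.s l₁ = L.s l₂ := by
  obtain ⟨g, hg, rfl, hsg⟩ := h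
  exact L.s_m g l₂ hsg

lemma rel_symm {l₁ l₂ : L.Arr} (h : qrel L G l₁ l₂) : qrel L G l₂ l₁ := by
  obtain ⟨g, hg, rfl, hsg⟩ := h
  refine ⟨L.i g, hGi g hg, ?_, ?_⟩
  · rw [← L.m_assoc _ _ _ (L.s_i g) hsg, L.i_m, hsg, L.u_m]
  · rw [L.s_i, L.r_m g l₂ hsg]

lemma rel_trans {l₁ l₂ l₃ : L.Arr} (h : qrel L G l₁ l₂) (h' : qrel L G l₂ l₃) :
    qrel L G l₁ l₃ := by
  obtain ⟨g, hg, rfl, hsg⟩ := h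
  obtain ⟨k, hk, rfl, hsk⟩ := h'
  have hgk : L.s g = L.r k := by rw [hsg, L.r_m k l₃ hsk]
  exact ⟨L.m g k, hGm g k hg hk hgk, (L.m_assoc g k l₃ hgk hsk).symm,
    by rw [L.s_m g k hgk, hsk]⟩

lemma rel_equiv : Equivalence (qrel L G) :=
  ⟨fun l => rel_refl hGu hGi hGm hGsr hGn l, fun h => rel_symm hGu hGi hGm hGsr hGn h, fun h h' => rel_trans hGu hGi hGm hGsr hGn h h'⟩

lemma mk_eq_iff {a b : L.Arr} :
    Quot.mk (qrel L G) a = Quot.mk (qrel L G) b ↔ qrel L G a b :=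
  Quot.eq.trans (rel_equiv hGu hGi hGm hGsr hGn).eqvGen_iff

lemma rel_m {l₁ l₂ l₁' l₂' : L.Arr} (h₁ : qrel L G l₁' l₁) (h₂ : qrel L G l₂' l₂)
    (hc : L.s l₁ = L.r l₂) : qrel L G (L.m l₁' l₂') (L.m l₁ l₂) := by
  obtain ⟨g, hg, rfl, hsg⟩ := h₁
  obtain ⟨h, hh, rfl, hsh⟩ := h₂
  have hl1h : L.s l₁ = L.r h := by rw [hc, ← hGsr h hh, hsh]
  have hk : L.m (L.m l₁ h) (L.i l₁) ∈ G := hGn l₁ h hh hl1h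
  set k := L.m (L.m l₁ h) (L.i l₁) with hkdef
  have hsmh : L.s (L.m l₁ h) = L.r (L.i l₁) := by
    rw [L.s_m l₁ h hl1h, hsh, L.r_i, hc]
  have hrk : L.r k = L.r l₁ := by rw [hkdef, L.r_m _ _ hsmh, L.r_m l₁ h hl1h]
  have hsk : L.s k = L.r l₁ := by rw [hkdef, L.s_m _ _ hsmh, L.s_i]
  have hsgk : L.s g = L.r k := by rw [hrk, hsg]
  have hrml : L.r (L.m l₁ l₂) = L.r l₁ := L.r_m l₁ l₂ hc
  refine ⟨L.m g k, hGm g k hg hk hsgk, ?_, ?_⟩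
  · -- m (m g l₁) (m h l₂) = m (m g k) (m l₁ l₂)
    have s1 : L.m (L.m g l₁) (L.m h l₂) = L.m g (L.m l₁ (L.m h l₂)) :=
      L.m_assoc _ _ _ hsg (by rw [L.r_m h l₂ hsh, hl1h])
    have s2 : L.m l₁ (L.m h l₂) = L.m (L.m l₁ h) l₂ :=
      (L.m_assoc l₁ h l₂ hl1h hsh).symm
    have s3 : L.m k (L.m l₁ l₂) = L.m (L.m l₁ h) l₂ := by
      have a1 : L.m k (L.m l₁ l₂) = L.m (L.m l₁ h) (L.m (L.i l₁) (L.m l₁ l₂)) :=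
        L.m_assoc _ _ _ hsmh (by rw [L.s_i, hrml])
      have a2 : L.m (L.i l₁) (L.m l₁ l₂) = l₂ := by
        rw [← L.m_assoc _ _ _ (L.s_i l₁) hc, L.i_m, hc, L.u_m]
      rw [a1, a2]
    have s4 : L.m g (L.m k (L.m l₁ l₂)) = L.m (L.m g k) (L.m l₁ l₂) :=
      (L.m_assoc g k (L.m l₁ l₂) hsgk (by rw [hsk, hrml])).symm
    rw [s1, s2, ← s3, s4]
  · rw [L.s_m g k hsgk, hsk, hrml]

lemma rel_i {l₁ l₂ : L.Arr} (h : qrel L G l₁ l₂) : qrel L G (L.i l₁) (L.i l₂) := by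
  obtain ⟨g, hg, rfl, hsg⟩ := h
  have hrg : L.r g = L.r l₂ := by rw [← hGsr g hg, hsg]
  have hc1 : L.s (L.i l₂) = L.r (L.i g) := by rw [L.s_i, L.r_i, hsg]
  have hgm : L.m (L.m (L.i l₂) (L.i g)) (L.i (L.i l₂)) ∈ G := hGn (L.i l₂) (L.i g) (hGi g hg) hc1
  rw [i_i] at hgm
  have hsz : L.s (L.m (L.i l₂) (L.i g)) = L.r l₂ := by rw [L.s_m _ _ hc1, L.s_i, hrg]
  refine ⟨L.m (L.m (L.i l₂) (L.i g)) l₂, hgm, ?_, ?_⟩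
  · rw [i_mm L g l₂ hsg]
    rw [L.m_assoc _ _ _ hsz (L.r_i l₂).symm, L.m_i]
    have : L.u (L.r l₂) = L.u (L.s (L.m (L.i l₂) (L.i g))) := by rw [hsz]
    rw [this, L.m_u]
  · rw [L.s_m _ _ (by rw [hsz]), L.r_i]

variable (hGopen : IsOpenMap (fun g : G => L.r g.1))

include hGopen

lemma s_open : IsOpenMap (fun g : G => L.s g.1) := by
  have he : (fun g : G => L.s g.1) = fun g : G => L.r g.1 :=
    funext fun g => hGsr g.1 g.2
  rw [he]; exact hGopen

lemma proj2_open :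
    IsOpenMap (fun p : {p : ↥G × L.Arr // L.s p.1.val = L.r p.2} => p.1.2) := by
  intro O hO
  obtain ⟨O', hO', rfl⟩ := isOpen_induced_iff.1 hO
  rw [isOpen_iff_forall_mem_open]
  rintro x ⟨⟨⟨g, l⟩, hgl⟩, hmem, rfl⟩
  obtain ⟨V, W, hV, hW, hgV, hlW, hVW⟩ := isOpen_prod_iff.1 hO' g l hmem
  refine ⟨W ∩ L.r ⁻¹' ((fun g : G => L.s g.1) '' V), ?_, ?_, hlW, ⟨g, hgV, hgl⟩⟩
  · rintro l' ⟨hl'W, g', hg'V, hg'⟩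
    exact ⟨⟨(g', l'), hg'⟩, hVW ⟨hg'V, hl'W⟩, rfl⟩
  · exact hW.inter (IsOpen.preimage L.cont_r (s_open hGu hGi hGm hGsr hGn hGopen V hV))

lemma mk_open : IsOpenMap (Quot.mk (qrel L G)) := by
  intro U hU
  rw [isOpen_coinduced (f := Quot.mk (qrel L G))]
  have hset : Quot.mk (qrel L G) ⁻¹' (Quot.mk (qrel L G) '' U) =
      (fun p : {p : ↥G × L.Arr // L.s p.1.val = L.r p.2} => p.1.2) ''
        ((fun p : {p : ↥G × L.Arr // L.s p.1.val = L.r p.2} => L.m p.1.1.val p.1.2) ⁻¹' U) := by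
    ext l
    constructor
    · rintro ⟨l', hl'U, heq⟩
      obtain ⟨g, hg, rfl, hsg⟩ := (mk_eq_iff hGu hGi hGm hGsr hGn).1 heq
      exact ⟨⟨(⟨g, hg⟩, l), hsg⟩, hl'U, rfl⟩
    · rintro ⟨⟨⟨g, l'⟩, hgl⟩, hmem, rfl⟩
      exact ⟨L.m g.val l', hmem, Quot.sound ⟨g.val, g.2, rfl, hgl⟩⟩
  have hcψ : Continuous (fun p : {p : ↥G × L.Arr // L.s p.1.val = L.r p.2} =>
      L.m p.1.1.val p.1.2) := by
    have h1 : Continuous (fun p : {p : ↥G × L.Arr // L.s p.1.val = L.r p.2} =>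
        (⟨(p.1.1.val, p.1.2), p.2⟩ : {q : L.Arr × L.Arr // L.s q.1 = L.r q.2})) := by
      refine Continuous.subtype_mk ?_ _
      exact (continuous_subtype_val.comp (continuous_fst.comp continuous_subtype_val)).prodMk
        (continuous_snd.comp continuous_subtype_val)
    exact L.cont_m.comp h1
  rw [hset]
  exact proj2_open hGu hGi hGm hGsr hGn hGopen _ (hcψ.isOpen_preimage _ hU)

end Rel

end GEproof

/-- a groupoid extension (a fibration that is a homeomorphism on
objects) has as fibre a normal subgroup bundle on which the range map is open, and
`F¹` induces a homeomorphism `L¹/G ≅ H¹` compatible with the groupoid structures;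
conversely any wide subgroupoid satisfying (i)–(iii) arises this way: the quotient
`L¹/G` carries a unique descended topological groupoid structure making the quotient
map a continuous functor, and the quotient functor is a groupoid extension with
fibre `G`. -/
theorem groupoid_extensions_are_normal_subgroup_bundles
    (L H : TopGroupoid) (F : ContFunctor L H)
    (hfib : IsFibration F) (hobj : IsHomeomorph F.obj) :
    -- (i) the fibre is a subgroup bundle:
    ((∀ g ∈ fibreArr F, L.s g = L.r g) ∧
    -- (ii) it is normal in `L`:
    (∀ l g, g ∈ fibreArr F → L.s l = L.r g → L.m (L.m l g) (L.i l) ∈ fibreArr F) ∧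
    -- (iii) the range map restricts to an open map on it:
    IsOpenMap (fun g : fibreArr F => L.r g.1) ∧
    -- (iv) `F¹` induces a homeomorphism `L¹/G ≅ H¹` compatible with the structures:
    (∃ φ : Quot (fun l₁ l₂ : L.Arr =>
          ∃ g ∈ fibreArr F, l₁ = L.m g l₂ ∧ L.s g = L.r l₂) → H.Arr,
      (∀ l, φ (Quot.mk _ l) = F.arr l) ∧
      IsHomeomorph φ ∧
      (∀ l, H.r (φ (Quot.mk _ l)) = F.obj (L.r l) ∧
        H.s (φ (Quot.mk _ l)) = F.obj (L.s l)) ∧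
      (∀ l₁ l₂, L.s l₁ = L.r l₂ →
        φ (Quot.mk _ (L.m l₁ l₂)) = H.m (φ (Quot.mk _ l₁)) (φ (Quot.mk _ l₂))))) ∧
    -- Conversely:
    (∀ Gset : Set L.Arr,
      -- a wide subgroupoid ...
      (∀ x, L.u x ∈ Gset) →
      (∀ g ∈ Gset, L.i g ∈ Gset) →
      (∀ g₁ g₂, g₁ ∈ Gset → g₂ ∈ Gset → L.s g₁ = L.r g₂ → L.m g₁ g₂ ∈ Gset) →
      -- ... satisfying (i)-(iii):
      (∀ g ∈ Gset, L.s g = L.r g) →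
      (∀ l g, g ∈ Gset → L.s l = L.r g → L.m (L.m l g) (L.i l) ∈ Gset) →
      IsOpenMap (fun g : Gset => L.r g.1) →
      -- ... yields a descended topological groupoid structure on `L¹/G`
      -- making the quotient map a continuous functor:
      ∃ rQ : {f : Quot (fun l₁ l₂ : L.Arr =>
            ∃ g ∈ Gset, l₁ = L.m g l₂ ∧ L.s g = L.r l₂) → L.Obj //
          ∀ l, f (Quot.mk _ l) = L.r l},
      ∃ sQ : {f : Quot (fun l₁ l₂ : L.Arr =>
            ∃ g ∈ Gset, l₁ = L.m g l₂ ∧ L.s g = L.r l₂) → L.Obj //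
          ∀ l, f (Quot.mk _ l) = L.s l},
      ∃ uQ : L.Obj → Quot (fun l₁ l₂ : L.Arr =>
            ∃ g ∈ Gset, l₁ = L.m g l₂ ∧ L.s g = L.r l₂),
      ∃ iQ : Quot (fun l₁ l₂ : L.Arr =>
            ∃ g ∈ Gset, l₁ = L.m g l₂ ∧ L.s g = L.r l₂) →
          Quot (fun l₁ l₂ : L.Arr => ∃ g ∈ Gset, l₁ = L.m g l₂ ∧ L.s g = L.r l₂),
      ∃ mQ : {ab : Quot (fun l₁ l₂ : L.Arr =>
              ∃ g ∈ Gset, l₁ = L.m g l₂ ∧ L.s g = L.r l₂) ×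
            Quot (fun l₁ l₂ : L.Arr =>
              ∃ g ∈ Gset, l₁ = L.m g l₂ ∧ L.s g = L.r l₂) //
            sQ.1 ab.1 = rQ.1 ab.2} →
          Quot (fun l₁ l₂ : L.Arr => ∃ g ∈ Gset, l₁ = L.m g l₂ ∧ L.s g = L.r l₂),
        (∀ x, uQ x = Quot.mk _ (L.u x)) ∧
        (∀ l, iQ (Quot.mk _ l) = Quot.mk _ (L.i l)) ∧
        (∀ l₁ l₂ (_h : L.s l₁ = L.r l₂)
            (hc : sQ.1 (Quot.mk _ l₁) = rQ.1 (Quot.mk _ l₂)),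
          mQ ⟨(Quot.mk _ l₁, Quot.mk _ l₂), hc⟩ = Quot.mk _ (L.m l₁ l₂)) ∧
        Continuous rQ.1 ∧ IsOpenMap rQ.1 ∧
        Continuous sQ.1 ∧ IsOpenMap sQ.1 ∧
        Continuous uQ ∧ Continuous iQ ∧ Continuous mQ ∧
        (∀ x, rQ.1 (uQ x) = x ∧ sQ.1 (uQ x) = x) ∧
        -- the quotient functor (identity on objects) is a groupoid fibration,
        -- hence a groupoid extension:
        Function.Surjective (fun l : L.Arr =>
          (⟨(Quot.mk _ l, L.s l), sQ.2 l⟩ :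
            {q : Quot (fun l₁ l₂ : L.Arr =>
                ∃ g ∈ Gset, l₁ = L.m g l₂ ∧ L.s g = L.r l₂) × L.Obj //
              sQ.1 q.1 = q.2})) ∧
        IsOpenMap (fun l : L.Arr =>
          (⟨(Quot.mk _ l, L.s l), sQ.2 l⟩ :
            {q : Quot (fun l₁ l₂ : L.Arr =>
                ∃ g ∈ Gset, l₁ = L.m g l₂ ∧ L.s g = L.r l₂) × L.Obj //
              sQ.1 q.1 = q.2})) ∧
        -- the fibre of the quotient functor is `Gset`:
        {l : L.Arr | Quot.mk (fun l₁ l₂ : L.Arr =>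
            ∃ g ∈ Gset, l₁ = L.m g l₂ ∧ L.s g = L.r l₂) l =
          Quot.mk _ (L.u (L.s l))} = Gset ∧
        -- uniqueness of the descended multiplication:
        (∀ mQ' : {ab : Quot (fun l₁ l₂ : L.Arr =>
                ∃ g ∈ Gset, l₁ = L.m g l₂ ∧ L.s g = L.r l₂) ×
              Quot (fun l₁ l₂ : L.Arr =>
                ∃ g ∈ Gset, l₁ = L.m g l₂ ∧ L.s g = L.r l₂) //
              sQ.1 ab.1 = rQ.1 ab.2} →
            Quot (fun l₁ l₂ : L.Arr => ∃ g ∈ Gset, l₁ = L.m g l₂ ∧ L.s g = L.r l₂),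
          (∀ l₁ l₂ (_h : L.s l₁ = L.r l₂)
              (hc : sQ.1 (Quot.mk _ l₁) = rQ.1 (Quot.mk _ l₂)),
            mQ' ⟨(Quot.mk _ l₁, Quot.mk _ l₂), hc⟩ = Quot.mk _ (L.m l₁ l₂)) →
          mQ' = mQ)) := by
  classical
  constructor
  · -- Forward direction
    have hsrf : ∀ g ∈ fibreArr F, L.s g = L.r g := by
      intro g hg
      have h1 : F.obj (L.r g) = F.obj (L.s g) := by
        rw [← F.r_arr, hg, H.r_u]
      exact (hobj.bijective.injective h1).symm
    have E := hobj.homeomorph F.obj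
    have hEapp : ∀ x, (hobj.homeomorph F.obj) x = F.obj x := fun x => rfl
    have hσp : ∀ h : H.Arr, H.s h = F.obj ((hobj.homeomorph F.obj).symm (H.s h)) := by
      intro h
      rw [← hEapp, Homeomorph.apply_symm_apply]
    refine ⟨hsrf, ?_, ?_, ?_⟩
    · -- (ii) normality
      intro l g hg hsl
      have hsg : L.s g = L.s l := by rw [hsrf g hg, ← hsl]
      have h1 : L.s (L.m l g) = L.r (L.i l) := by
        rw [L.s_m l g hsl, L.r_i, hsg]
      show F.arr _ = _
      have h3 : L.s (L.m (L.m l g) (L.i l)) = L.r l := by rw [L.s_m _ _ h1, L.s_i]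
      rw [h3, F.m_arr _ _ h1, F.m_arr l g hsl, F.i_arr, hg]
      have h2 : F.obj (L.s g) = H.s (F.arr l) := by rw [F.s_arr, hsg]
      rw [h2, H.m_u, H.m_i, F.r_arr]
    · -- (iii) openness of the restricted range map
      intro V hV
      obtain ⟨U, hU, rfl⟩ := isOpen_induced_iff.1 hV
      have hτ : Continuous (fun x : L.Obj =>
          (⟨(H.u (F.obj x), x), by rw [H.s_u]⟩ : FibTarget F)) :=
        Continuous.subtype_mk ((H.cont_u.comp F.cont_obj).prodMk continuous_id) _
      have hset : (fun g : fibreArr F => L.r g.1) '' (Subtype.val ⁻¹' U) =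
          (fun x : L.Obj => (⟨(H.u (F.obj x), x), by rw [H.s_u]⟩ : FibTarget F)) ⁻¹'
            (fibMap F '' U) := by
        ext x
        constructor
        · rintro ⟨⟨g, hg⟩, hgU, rfl⟩
          refine ⟨g, hgU, ?_⟩
          apply Subtype.ext
          have hs : L.s g = L.r g := hsrf g hg
          show (F.arr g, L.s g) = (H.u (F.obj (L.r g)), L.r g)
          rw [hg, hs]
        · rintro ⟨l, hlU, heq⟩
          have h1 : F.arr l = H.u (F.obj x) ∧ L.s l = x := by
            have h0 := congrArg Subtype.val heq
            exact ⟨congrArg Prod.fst h0, congrArg Prod.snd h0⟩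
          have hlf : l ∈ fibreArr F := by
            show F.arr l = _
            rw [h1.1, h1.2]
          refine ⟨⟨l, hlf⟩, hlU, ?_⟩
          show L.r l = x
          rw [← hsrf l hlf, h1.2]
      rw [hset]
      exact IsOpen.preimage hτ (hfib.2 U hU)
    · -- (iv) the induced homeomorphism
      have wd : ∀ a b : L.Arr,
          (∃ g ∈ fibreArr F, a = L.m g b ∧ L.s g = L.r b) → F.arr a = F.arr b := by
        rintro a b ⟨g, hg, rfl, hsg⟩
        rw [F.m_arr g b hsg, hg]
        have h1 : F.obj (L.s g) = H.r (F.arr b) := by rw [F.r_arr, hsg]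
        rw [h1, H.u_m]
      have harr_open : IsOpenMap F.arr := by
        intro U hU
        have hσ : Continuous (fun h : H.Arr =>
            (⟨(h, (hobj.homeomorph F.obj).symm (H.s h)), hσp h⟩ : FibTarget F)) :=
          Continuous.subtype_mk
            (continuous_id.prodMk
              ((hobj.homeomorph F.obj).symm.continuous.comp H.cont_s)) _
        have hset : F.arr '' U = (fun h : H.Arr =>
            (⟨(h, (hobj.homeomorph F.obj).symm (H.s h)), hσp h⟩ : FibTarget F)) ⁻¹'
              (fibMap F '' U) := by
          ext h
          constructor
          · rintro ⟨l, hl, rfl⟩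
            refine ⟨l, hl, ?_⟩
            apply Subtype.ext
            show (F.arr l, L.s l) = (F.arr l, (hobj.homeomorph F.obj).symm (H.s (F.arr l)))
            have : (hobj.homeomorph F.obj).symm (H.s (F.arr l)) = L.s l := by
              rw [F.s_arr, ← hEapp, Homeomorph.symm_apply_apply]
            rw [this]
          · rintro ⟨l, hl, heq⟩
            exact ⟨l, hl, congrArg (fun t : FibTarget F => t.1.1) heq⟩
        rw [hset]
        exact IsOpen.preimage hσ (hfib.2 U hU)
      refine ⟨Quot.lift F.arr wd, fun l => rfl,
        ⟨continuous_quot_lift wd F.cont_arr, ?_, ?_, ?_⟩,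
        fun l => ⟨F.r_arr l, F.s_arr l⟩, fun l₁ l₂ h => F.m_arr l₁ l₂ h⟩
      · -- open
        intro W hW
        have hset2 : Quot.lift F.arr wd '' W = F.arr '' (Quot.mk _ ⁻¹' W) := by
          ext h
          constructor
          · rintro ⟨q, hq, rfl⟩
            obtain ⟨l, rfl⟩ : ∃ l, Quot.mk _ l = q := ⟨q.out, q.out_eq⟩
            exact ⟨l, hq, rfl⟩
          · rintro ⟨l, hl, rfl⟩
            exact ⟨Quot.mk _ l, hl, rfl⟩
        rw [hset2]
        exact harr_open _ (IsOpen.preimage continuous_quot_mk hW)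
      · -- injective
        intro q₁ q₂ h
        obtain ⟨l₁, rfl⟩ : ∃ l, Quot.mk _ l = q₁ := ⟨q₁.out, q₁.out_eq⟩
        obtain ⟨l₂, rfl⟩ : ∃ l, Quot.mk _ l = q₂ := ⟨q₂.out, q₂.out_eq⟩
        replace h : F.arr l₁ = F.arr l₂ := h
        apply Quot.sound
        have hs12 : L.s l₁ = L.s l₂ :=
          hobj.bijective.injective (by rw [← F.s_arr, ← F.s_arr, h])
        have hc : L.s l₁ = L.r (L.i l₂) := by rw [hs12, L.r_i]
        refine ⟨L.m l₁ (L.i l₂), ?_, ?_, ?_⟩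
        · show F.arr _ = _
          have h5 : L.s (L.m l₁ (L.i l₂)) = L.r l₂ := by rw [L.s_m _ _ hc, L.s_i]
          rw [h5, F.m_arr _ _ hc, F.i_arr, h, H.m_i, F.r_arr]
        · symm
          rw [L.m_assoc l₁ (L.i l₂) l₂ hc (L.s_i l₂), L.i_m, ← hs12, L.m_u]
        · rw [L.s_m _ _ hc, L.s_i]
      · -- surjective
        intro h
        obtain ⟨l, hl⟩ := hfib.1 ⟨(h, (hobj.homeomorph F.obj).symm (H.s h)), hσp h⟩
        exact ⟨Quot.mk _ l, congrArg (fun t : FibTarget F => t.1.1) hl⟩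
  · -- Converse direction
    intro Gset hGu hGi hGm hGsr hGn hGopen
    have hmkiff : ∀ {a b : L.Arr},
        Quot.mk (GEproof.qrel L Gset) a = Quot.mk (GEproof.qrel L Gset) b ↔
          GEproof.qrel L Gset a b :=
      fun {a b} => GEproof.mk_eq_iff hGu hGi hGm hGsr hGn
    have hmk_open : IsOpenMap (Quot.mk (GEproof.qrel L Gset)) :=
      GEproof.mk_open hGu hGi hGm hGsr hGn hGopen
    have hmk_surj : Function.Surjective (Quot.mk (GEproof.qrel L Gset)) :=
      fun q => ⟨q.out, q.out_eq⟩
    have hout : ∀ l : L.Arr,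
        GEproof.qrel L Gset (Quot.mk (GEproof.qrel L Gset) l).out l :=
      fun l => hmkiff.1 (Quot.out_eq _)
    have hcompat : ∀ l₁ l₂ : L.Arr, L.s l₁ = L.r l₂ →
        Quot.mk (GEproof.qrel L Gset)
          (L.m (Quot.mk (GEproof.qrel L Gset) l₁).out
            (Quot.mk (GEproof.qrel L Gset) l₂).out) =
          Quot.mk (GEproof.qrel L Gset) (L.m l₁ l₂) :=
      fun l₁ l₂ hc =>
        Quot.sound (GEproof.rel_m hGu hGi hGm hGsr hGn (hout l₁) (hout l₂) hc)
    refine ⟨⟨Quot.lift L.r (fun a b h => GEproof.rel_r hGu hGi hGm hGsr hGn h),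
        fun l => rfl⟩,
      ⟨Quot.lift L.s (fun a b h => GEproof.rel_s hGu hGi hGm hGsr hGn h),
        fun l => rfl⟩,
      fun x => Quot.mk _ (L.u x),
      Quot.lift (fun l => Quot.mk _ (L.i l))
        (fun a b h => Quot.sound (GEproof.rel_i hGu hGi hGm hGsr hGn h)),
      fun p => Quot.mk _ (L.m p.1.1.out p.1.2.out),
      fun x => rfl, fun l => rfl,
      fun l₁ l₂ h hc => hcompat l₁ l₂ h,
      continuous_quot_lift _ L.cont_r, ?_,
      continuous_quot_lift _ L.cont_s, ?_,
      continuous_quot_mk.comp L.cont_u,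
      continuous_quot_lift _ (continuous_quot_mk.comp L.cont_i),
      ?_,
      fun x => ⟨L.r_u x, L.s_u x⟩,
      ?_, ?_, ?_, ?_⟩
    · -- rQ open
      intro W hW
      have hset : Quot.lift L.r (fun a b h => GEproof.rel_r hGu hGi hGm hGsr hGn h) '' W
          = L.r '' (Quot.mk (GEproof.qrel L Gset) ⁻¹' W) := by
        ext y
        constructor
        · rintro ⟨q, hq, rfl⟩
          obtain ⟨l, rfl⟩ := hmk_surj q
          exact ⟨l, hq, rfl⟩
        · rintro ⟨l, hl, rfl⟩
          exact ⟨Quot.mk _ l, hl, rfl⟩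
      erw [hset]
      exact L.open_r _ (IsOpen.preimage continuous_quot_mk hW)
    · -- sQ open
      intro W hW
      have hset : Quot.lift L.s (fun a b h => GEproof.rel_s hGu hGi hGm hGsr hGn h) '' W
          = L.s '' (Quot.mk (GEproof.qrel L Gset) ⁻¹' W) := by
        ext y
        constructor
        · rintro ⟨q, hq, rfl⟩
          obtain ⟨l, rfl⟩ := hmk_surj q
          exact ⟨l, hq, rfl⟩
        · rintro ⟨l, hl, rfl⟩
          exact ⟨Quot.mk _ l, hl, rfl⟩
      erw [hset]
      exact L.open_s _ (IsOpen.preimage continuous_quot_mk hW)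
    · -- mQ continuous
      set Q := Quot (GEproof.qrel L Gset) with hQ
      let q : {p : L.Arr × L.Arr // L.s p.1 = L.r p.2} →
          {ab : Q × Q //
            Quot.lift L.s (fun a b h => GEproof.rel_s hGu hGi hGm hGsr hGn h) ab.1 =
            Quot.lift L.r (fun a b h => GEproof.rel_r hGu hGi hGm hGsr hGn h) ab.2} :=
        fun p => ⟨(Quot.mk _ p.1.1, Quot.mk _ p.1.2), p.2⟩
      have hq_cont : Continuous q :=
        Continuous.subtype_mk
          ((continuous_quot_mk.comp (continuous_fst.comp continuous_subtype_val)).prodMk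
            (continuous_quot_mk.comp (continuous_snd.comp continuous_subtype_val))) _
      have hq_surj : Function.Surjective q := by
        rintro ⟨⟨a, b⟩, hab⟩
        have hab' : L.s a.out = L.r b.out := by
          rw [← a.out_eq, ← b.out_eq] at hab
          exact hab
        exact ⟨⟨(a.out, b.out), hab'⟩,
          Subtype.ext (Prod.ext a.out_eq b.out_eq)⟩
      have hq_open : IsOpenMap q := by
        intro O hO
        obtain ⟨O', hO', rfl⟩ := isOpen_induced_iff.1 hO
        have himg : q '' (Subtype.val ⁻¹' O') =
            Subtype.val ⁻¹'
              (Prod.map (Quot.mk (GEproof.qrel L Gset)) (Quot.mk (GEproof.qrel L Gset))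
                '' O') := by
          ext t
          constructor
          · rintro ⟨⟨⟨l₁, l₂⟩, hc⟩, hmem, rfl⟩
            exact ⟨(l₁, l₂), hmem, rfl⟩
          · obtain ⟨⟨a, b⟩, hab⟩ := t
            rintro ⟨⟨l₁, l₂⟩, hmem, heq⟩
            rw [Prod.map_apply, Prod.mk.injEq] at heq
            obtain ⟨h1, h2⟩ := heq
            subst h1; subst h2
            exact ⟨⟨(l₁, l₂), hab⟩, hmem, rfl⟩
        rw [himg]
        exact IsOpen.preimage continuous_subtype_val ((hmk_open.prodMap hmk_open) O' hO')
      have hq_qm := IsOpenMap.isQuotientMap hq_open hq_cont hq_surj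
      erw [hq_qm.continuous_iff]
      have hfun : (fun p : {ab : Q × Q //
            Quot.lift L.s (fun a b h => GEproof.rel_s hGu hGi hGm hGsr hGn h) ab.1 =
            Quot.lift L.r (fun a b h => GEproof.rel_r hGu hGi hGm hGsr hGn h) ab.2} =>
            Quot.mk (GEproof.qrel L Gset) (L.m p.1.1.out p.1.2.out)) ∘ q =
          fun p : {p : L.Arr × L.Arr // L.s p.1 = L.r p.2} =>
            Quot.mk (GEproof.qrel L Gset) (L.m p.1.1 p.1.2) :=
        funext fun p => hcompat p.1.1 p.1.2 p.2
      exact hfun ▸ continuous_quot_mk.comp L.cont_m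
    · -- fibMap surjective
      rintro ⟨⟨a, x⟩, hax⟩
      rw [← a.out_eq] at hax
      exact ⟨a.out, Subtype.ext (Prod.ext a.out_eq hax)⟩
    · -- fibMap open
      intro U hU
      have hset : (fun l : L.Arr =>
            (⟨(Quot.mk (GEproof.qrel L Gset) l, L.s l), rfl⟩ :
              {p : Quot (GEproof.qrel L Gset) × L.Obj //
                Quot.lift L.s (fun a b h => GEproof.rel_s hGu hGi hGm hGsr hGn h) p.1
                  = p.2})) '' U =
          (fun t : {p : Quot (GEproof.qrel L Gset) × L.Obj //
                Quot.lift L.s (fun a b h => GEproof.rel_s hGu hGi hGm hGsr hGn h) p.1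
                  = p.2} => t.1.1) ⁻¹' (Quot.mk (GEproof.qrel L Gset) '' U) := by
        ext t
        constructor
        · rintro ⟨l, hl, rfl⟩
          exact ⟨l, hl, rfl⟩
        · obtain ⟨⟨a, x⟩, hax⟩ := t
          rintro ⟨l, hl, heq⟩
          have heq' : Quot.mk (GEproof.qrel L Gset) l = a := heq
          subst heq'
          refine ⟨l, hl, Subtype.ext (Prod.ext rfl ?_)⟩
          exact hax
      exact hset ▸ IsOpen.preimage (continuous_fst.comp continuous_subtype_val)
        (hmk_open U hU)
    · -- fibre is Gset
      ext l
      simp only [Set.mem_setOf_eq]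
      constructor
      · intro hl
        obtain ⟨g, hg, heq, hsg⟩ := hmkiff.1 hl
        have hsg' : L.s g = L.s l := by rw [hsg, L.r_u]
        rw [heq, ← hsg', L.m_u]
        exact hg
      · intro hl
        exact hmkiff.2 ⟨l, hl, (L.m_u l).symm, (L.r_u _).symm⟩
    · -- uniqueness of mQ
      intro mQ' hcompat'
      funext p
      obtain ⟨⟨a, b⟩, hab⟩ := p
      obtain ⟨l₁, rfl⟩ := hmk_surj a
      obtain ⟨l₂, rfl⟩ := hmk_surj b
      have hc : L.s l₁ = L.r l₂ := hab
      exact (hcompat' l₁ l₂ hc hab).trans (hcompat l₁ l₂ hc).symm
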